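/- Fix n ≥ 1 and let B = Metric.ball (0 : EuclideanSpace ℝ (Fin n)) 1 be the open unit ball. There exists a family of homeomorphisms f : B → (EuclideanSpace ℝ (Fin n) ≃ₜ EuclideanSpace ℝ (Fin n)) such that: (1) f u 0 = u for every u ∈ B; (2) f u x = x for every u ∈ B and every x ∉ B; and (3) the maps (u, x) ↦ f u x and (u, x) ↦ (f u).symm x are jointly continuous on B × EuclideanSpace ℝ (Fin n). -/

import Mathlib

open Metric

section Aux

variable {E : Type*} [NormedAddCommGroup E] [NormedSpace ℝ E]

/-- clamped radial parameter -/
noncomputable def sAux (x : E) : ℝ := max 0 (1 - ‖x‖)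

noncomputable def wAux (v x : E) : E := x + sAux x • v

noncomputable def DAux (v x : E) : ℝ := sAux x + ‖wAux v x‖

noncomputable def GAux (v x : E) : E := (DAux v x)⁻¹ • wAux v x

noncomputable def FAux (v x : E) : E := if ‖x‖ < 1 then GAux v x else x

lemma sAux_nonneg (x : E) : 0 ≤ sAux x := le_max_left _ _

lemma sAux_of_le {x : E} (h : ‖x‖ ≤ 1) : sAux x = 1 - ‖x‖ :=
  max_eq_right (by linarith)

lemma DAux_pos (v x : E) : 0 < DAux v x := by
  have h1 := sAux_nonneg x
  have h2 : (0:ℝ) ≤ ‖wAux v x‖ := norm_nonneg _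
  rcases (add_nonneg h1 h2).lt_or_eq with h | h
  · exact h
  · exfalso
    have hD0 : sAux x + ‖wAux v x‖ = 0 := h.symm
    have hs : sAux x = 0 := by linarith
    have hw : ‖wAux v x‖ = 0 := by linarith
    have hx : wAux v x = x := by simp [wAux, hs]
    rw [hx, norm_eq_zero] at hw
    have : sAux x = 1 := by simp [hw, sAux]
    linarith

lemma GAux_sphere {x : E} (v : E) (h : ‖x‖ = 1) : GAux v x = x := by
  have hs : sAux x = 0 := by simp [sAux, h]
  have hw : wAux v x = x := by simp [wAux, hs]
  simp [GAux, DAux, hs, hw, h]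

lemma norm_GAux {x : E} (v : E) (h : ‖x‖ ≤ 1) :
    ‖GAux v x‖ = 1 - sAux x / DAux v x := by
  have hD := DAux_pos v x
  have : ‖GAux v x‖ = (DAux v x)⁻¹ * ‖wAux v x‖ := by
    rw [GAux, norm_smul, Real.norm_eq_abs, abs_of_pos (inv_pos.2 hD)]
  rw [this]
  have hw : ‖wAux v x‖ = DAux v x - sAux x := by rw [DAux]; ring
  rw [hw]
  field_simp

lemma norm_GAux_lt {x : E} (v : E) (h : ‖x‖ < 1) : ‖GAux v x‖ < 1 := by
  have hD := DAux_pos v x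
  rw [norm_GAux v h.le]
  have hs : 0 < sAux x := by rw [sAux_of_le h.le]; linarith
  have : 0 < sAux x / DAux v x := div_pos hs hD
  linarith

lemma GAux_inv {x : E} (v : E) (h : ‖x‖ ≤ 1) : GAux (-v) (GAux v x) = x := by
  have hD := DAux_pos v x
  set s := sAux x with hs
  set D := DAux v x with hDdef
  set y := GAux v x with hy
  have hny : ‖y‖ = 1 - s / D := norm_GAux v h
  have hsy : sAux y = s / D := by
    rw [sAux, hny]
    have : (0:ℝ) ≤ s / D := div_nonneg (sAux_nonneg x) hD.le
    rw [max_eq_right]; · ring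
    · linarith
  have hwy : wAux (-v) y = D⁻¹ • x := by
    have hx : wAux v x = x + s • v := by rw [wAux, ← hs]
    rw [wAux, hsy, hy, GAux, ← hDdef, hx]
    have hDne : D ≠ 0 := hD.ne'
    match_scalars <;> field_simp <;> ring
  have hDy : DAux (-v) y = D⁻¹ := by
    rw [DAux, hsy, hwy, norm_smul, Real.norm_eq_abs, abs_of_pos (inv_pos.2 hD)]
    have hsx : s = 1 - ‖x‖ := sAux_of_le h
    have hDx : D = s + ‖wAux v x‖ := hDdef
    rw [hsx]
    field_simp
    ring
  rw [GAux, hwy, hDy, inv_inv, smul_smul, mul_inv_cancel₀ hD.ne', one_smul]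

lemma FAux_inv (v x : E) : FAux (-v) (FAux v x) = x := by
  by_cases h : ‖x‖ < 1
  · have h1 : FAux v x = GAux v x := if_pos h
    have h2 : ‖GAux v x‖ < 1 := norm_GAux_lt v h
    rw [h1, FAux, if_pos h2, GAux_inv v h.le]
  · have h1 : FAux v x = x := if_neg h
    rw [h1, FAux, if_neg h]

lemma continuous_GAux : Continuous (fun p : E × E => GAux p.1 p.2) := by
  have hs : Continuous (fun x : E => sAux x) :=
    continuous_const.max (continuous_const.sub continuous_norm)
  have hw : Continuous (fun p : E × E => wAux p.1 p.2) :=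
    continuous_snd.add ((hs.comp continuous_snd).smul continuous_fst)
  have hD : Continuous (fun p : E × E => DAux p.1 p.2) :=
    (hs.comp continuous_snd).add hw.norm
  exact (hD.inv₀ fun p => (DAux_pos p.1 p.2).ne').smul hw

lemma continuous_FAux : Continuous (fun p : E × E => FAux p.1 p.2) := by
  unfold FAux
  apply Continuous.if
  · intro a ha
    have h1 : ‖a.2‖ = 1 :=
      frontier_lt_subset_eq continuous_snd.norm continuous_const ha
    exact GAux_sphere a.1 h1
  · exact continuous_GAux
  · exact continuous_snd

noncomputable def homeoAux (v : E) : E ≃ₜ E where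
  toFun := FAux v
  invFun := FAux (-v)
  left_inv x := FAux_inv v x
  right_inv x := by have := FAux_inv (-v) x; rwa [neg_neg] at this
  continuous_toFun := continuous_FAux.comp (continuous_const.prodMk continuous_id)
  continuous_invFun := continuous_FAux.comp (continuous_const.prodMk continuous_id)

lemma homeoAux_apply (v x : E) : homeoAux v x = FAux v x := rfl

lemma continuous_FAux_param {X : Type*} [TopologicalSpace X] {g : X → E}
    (hg : Continuous g) : Continuous (fun p : X × E => FAux (g p.1) p.2) :=
  continuous_FAux.comp ((hg.comp continuous_fst).prodMk continuous_snd)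

lemma continuous_homeoAux_param {X : Type*} [TopologicalSpace X] {g : X → E}
    (hg : Continuous g) : Continuous (fun p : X × E => homeoAux (g p.1) p.2) := by
  simp only [homeoAux_apply]
  exact continuous_FAux_param hg

lemma homeoAux_symm_apply (v x : E) : (homeoAux v).symm x = FAux (-v) x := rfl

lemma continuous_homeoAux_param_symm {X : Type*} [TopologicalSpace X] {g : X → E}
    (hg : Continuous g) : Continuous (fun p : X × E => (homeoAux (g p.1)).symm p.2) := by
  simp only [homeoAux_symm_apply]
  exact continuous_FAux_param hg.neg

end Aux

/-- There is a continuous family of homeomorphisms of `EuclideanSpace ℝ (Fin n)`,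
parametrized by the points `u` of the open unit ball `B`, each supported in `B`,
taking the center `0` of the ball to `u`. -/
theorem exists_continuous_family_of_homeomorphisms_deforming_center_of_ball
    (n : ℕ) (hn : 1 ≤ n) :
    ∃ f : (ball (0 : EuclideanSpace ℝ (Fin n)) 1) →
        (EuclideanSpace ℝ (Fin n) ≃ₜ EuclideanSpace ℝ (Fin n)),
      (∀ u, f u 0 = (u : EuclideanSpace ℝ (Fin n))) ∧
      (∀ (u) (x : EuclideanSpace ℝ (Fin n)),
        x ∉ ball (0 : EuclideanSpace ℝ (Fin n)) 1 → f u x = x) ∧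
      Continuous (fun p : (ball (0 : EuclideanSpace ℝ (Fin n)) 1) × EuclideanSpace ℝ (Fin n) =>
        f p.1 p.2) ∧
      Continuous (fun p : (ball (0 : EuclideanSpace ℝ (Fin n)) 1) × EuclideanSpace ℝ (Fin n) =>
        (f p.1).symm p.2) := by
  set E := EuclideanSpace ℝ (Fin n)
  have hnorm : ∀ u : ball (0 : E) 1, ‖(u : E)‖ < 1 := by
    intro u
    have := u.2
    rwa [mem_ball_zero_iff] at this
  set vmap : ball (0 : E) 1 → E := fun u => (1 - ‖(u : E)‖)⁻¹ • (u : E) with hvmap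
  refine ⟨fun u => homeoAux (vmap u), ?_, ?_, ?_, ?_⟩
  · intro u
    have hu := hnorm u
    have h1 : (1:ℝ) - ‖(u : E)‖ > 0 := by linarith
    show FAux (vmap u) 0 = (u : E)
    have h0 : ‖(0 : E)‖ < 1 := by simp
    rw [FAux, if_pos h0]
    have hs : sAux (0 : E) = 1 := by simp [sAux]
    have hw : wAux (vmap u) (0 : E) = vmap u := by simp [wAux, hs]
    have hnv : ‖vmap u‖ = (1 - ‖(u : E)‖)⁻¹ * ‖(u : E)‖ := by
      rw [hvmap, norm_smul, Real.norm_eq_abs, abs_of_pos (inv_pos.2 h1)]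
    have hD : DAux (vmap u) (0 : E) = (1 - ‖(u : E)‖)⁻¹ := by
      rw [DAux, hs, hw, hnv]
      field_simp
      ring
    rw [GAux, hD, hw, inv_inv, hvmap]
    rw [smul_smul, mul_inv_cancel₀ h1.ne', one_smul]
  · intro u x hx
    rw [mem_ball_zero_iff, not_lt] at hx
    show FAux (vmap u) x = x
    rw [FAux, if_neg (not_lt.2 hx)]
  · have hv : Continuous vmap := by
      refine Continuous.smul (f := fun u : ball (0:E) 1 => (1 - ‖(u : E)‖)⁻¹) (g := fun u : ball (0:E) 1 => (u : E)) ?_ ?_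
      · apply Continuous.inv₀
        · exact continuous_const.sub continuous_subtype_val.norm
        · intro u; have := hnorm u; intro h; rw [sub_eq_zero] at h; linarith
      · exact continuous_subtype_val
    exact continuous_homeoAux_param hv
  · have hv : Continuous vmap := by
      refine Continuous.smul (f := fun u : ball (0:E) 1 => (1 - ‖(u : E)‖)⁻¹) (g := fun u : ball (0:E) 1 => (u : E)) ?_ ?_
      · apply Continuous.inv₀
        · exact continuous_const.sub continuous_subtype_val.norm
        · intro u; have := hnorm u; intro h; rw [sub_eq_zero] at h; linarith
      · exact continuous_subtype_val
    exact continuous_homeoAux_param_symm hv
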